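/- The embedding functor S : OGraph → Graph/2_G is a selective adhesive functor: it is faithful, preserves monomorphisms, creates isomorphisms, and reflects pushouts. -/

import Mathlib

open CategoryTheory Limits

/-! Directed graphs as `E ⇉ P` data, the type graph `2_G`, the slice category of
`2_G`-typed graphs, and the category `OGraph` of open-graphs. -/

structure PreGraph : Type 1 where
  E : Type
  P : Type
  s : E → P
  t : E → P

/-- The points of the type graph `2_G`: vertices `V` and edge-points `ε`. -/
inductive TyP : Type
  | V : TyP
  | eps : TyP
  deriving DecidableEq

/-- The edges of the type graph `2_G`: `V → ε`, `ε → V` and the loop on `ε`. -/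
inductive TyE : Type
  | ve : TyE
  | ev : TyE
  | loop : TyE
  deriving DecidableEq

/-- The type graph `2_G`. -/
def twoG : PreGraph where
  E := TyE
  P := TyP
  s e := match e with | .ve => .V | .ev => .eps | .loop => .eps
  t e := match e with | .ve => .eps | .ev => .V | .loop => .eps

structure GraphHom (G H : PreGraph) : Type where
  pe : G.E → H.E
  pp : G.P → H.P
  hs : ∀ e, H.s (pe e) = pp (G.s e)
  ht : ∀ e, H.t (pe e) = pp (G.t e)

def GraphHom.idHom (G : PreGraph) : GraphHom G G :=
  ⟨fun e => e, fun p => p, fun _ => rfl, fun _ => rfl⟩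

def GraphHom.comp {G H K : PreGraph} (f : GraphHom G H) (g : GraphHom H K) :
    GraphHom G K :=
  ⟨fun e => g.pe (f.pe e), fun p => g.pp (f.pp p),
   fun e => by rw [g.hs, f.hs], fun e => by rw [g.ht, f.ht]⟩

/-- An object of the slice category `Graph/2_G`: a graph together with a typing
morphism into `2_G`. -/
structure TypedGraph : Type 1 where
  G : PreGraph
  τ : GraphHom G twoG

/-- A morphism of `2_G`-typed graphs: a graph morphism commuting with the typing. -/
@[ext]
structure TypedHom (X Y : TypedGraph) : Type where
  h : GraphHom X.G Y.G
  comm_pp : ∀ p, Y.τ.pp (h.pp p) = X.τ.pp p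
  comm_pe : ∀ e, Y.τ.pe (h.pe e) = X.τ.pe e

def TypedHom.idHom (X : TypedGraph) : TypedHom X X :=
  ⟨GraphHom.idHom X.G, fun _ => rfl, fun _ => rfl⟩

def TypedHom.comp {X Y Z : TypedGraph} (f : TypedHom X Y) (g : TypedHom Y Z) :
    TypedHom X Z :=
  ⟨f.h.comp g.h,
   fun p => by show Z.τ.pp (g.h.pp (f.h.pp p)) = _; rw [g.comm_pp, f.comm_pp],
   fun e => by show Z.τ.pe (g.h.pe (f.h.pe e)) = _; rw [g.comm_pe, f.comm_pe]⟩

instance : Category TypedGraph where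
  Hom := TypedHom
  id := TypedHom.idHom
  comp := TypedHom.comp
  id_comp _ := rfl
  comp_id _ := rfl
  assoc _ _ _ := rfl

/-- An open-graph: a `2_G`-typed graph in which every edge-point has at most one
in-edge and at most one out-edge. -/
structure OGraph : Type 1 where
  X : TypedGraph
  open_in : ∀ p, X.τ.pp p = TyP.eps →
    ∀ e₁ e₂, X.G.t e₁ = p → X.G.t e₂ = p → e₁ = e₂
  open_out : ∀ p, X.τ.pp p = TyP.eps →
    ∀ e₁ e₂, X.G.s e₁ = p → X.G.s e₂ = p → e₁ = e₂

/-- A typed-graph morphism is full on vertices when every edge adjacent to the image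
`f(v)` of a vertex `v` is the image of an edge adjacent to `v`. -/
def FullOnVertices {X Y : TypedGraph} (f : TypedHom X Y) : Prop :=
  ∀ v, X.τ.pp v = TyP.V → ∀ e, (Y.G.s e = f.h.pp v ∨ Y.G.t e = f.h.pp v) →
    ∃ e', f.h.pe e' = e ∧ (X.G.s e' = v ∨ X.G.t e' = v)

/-- A morphism of open-graphs: a typed-graph morphism that is full on vertices. -/
@[ext]
structure OHom (G H : OGraph) : Type where
  f : TypedHom G.X H.X
  full : FullOnVertices f

theorem fullOnVertices_id (G : OGraph) : FullOnVertices (TypedHom.idHom G.X) :=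
  fun _ _ e he => ⟨e, rfl, he⟩

theorem fullOnVertices_comp {G H K : OGraph} (f : TypedHom G.X H.X)
    (g : TypedHom H.X K.X) (hf : FullOnVertices f) (hg : FullOnVertices g) :
    FullOnVertices (f.comp g) := by
  intro v hv e he
  have hfv : H.X.τ.pp (f.h.pp v) = TyP.V := by rw [f.comm_pp]; exact hv
  obtain ⟨e', he', hadj'⟩ := hg (f.h.pp v) hfv e he
  obtain ⟨e'', he'', hadj''⟩ := hf v hv e' hadj'
  exact ⟨e'', by show g.h.pe (f.h.pe e'') = e; rw [he'', he'], hadj''⟩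

def OHom.idHom (G : OGraph) : OHom G G := ⟨TypedHom.idHom G.X, fullOnVertices_id G⟩

def OHom.comp {G H K : OGraph} (φ : OHom G H) (ψ : OHom H K) : OHom G K :=
  ⟨φ.f.comp ψ.f, fullOnVertices_comp φ.f ψ.f φ.full ψ.full⟩

instance : Category OGraph where
  Hom := OHom
  id := OHom.idHom
  comp := OHom.comp
  id_comp _ := rfl
  comp_id _ := rfl
  assoc _ _ _ := rfl

/-- The point map of an open-graph morphism. -/
def OHom.pp {G H : OGraph} (φ : OHom G H) : G.X.G.P → H.X.G.P := φ.f.h.pp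

/-- The edge map of an open-graph morphism. -/
def OHom.pe {G H : OGraph} (φ : OHom G H) : G.X.G.E → H.X.G.E := φ.f.h.pe

/-- The embedding functor `S : OGraph ⥤ Graph/2_G`. -/
def S : OGraph ⥤ TypedGraph where
  obj G := G.X
  map f := f.f
  map_id _ := rfl
  map_comp _ _ := rfl

/-- An edge-point of an open-graph. -/
def IsEdgePoint (G : OGraph) (p : G.X.G.P) : Prop := G.X.τ.pp p = TyP.eps

/-- An input: an edge-point with no in-edges. -/
def IsInput (G : OGraph) (p : G.X.G.P) : Prop :=
  IsEdgePoint G p ∧ ∀ e, G.X.G.t e ≠ p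

/-- An output: an edge-point with no out-edges. -/
def IsOutput (G : OGraph) (p : G.X.G.P) : Prop :=
  IsEdgePoint G p ∧ ∀ e, G.X.G.s e ≠ p

/-- The boundary graph of `G`: the point graph `In(G) + Out(G)`. -/
def boundaryGraph (G : OGraph) : OGraph where
  X := { G := { E := Empty
                P := {p // IsInput G p} ⊕ {p // IsOutput G p}
                s := fun e => e.elim
                t := fun e => e.elim }
         τ := { pe := fun e => e.elim
                pp := fun _ => TyP.eps
                hs := fun e => e.elim
                ht := fun e => e.elim } }
  open_in := fun _ _ e => e.elim
  open_out := fun _ _ e => e.elim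

/-- The boundary map `b : In(G) + Out(G) ⟶ G`. -/
def boundaryMap (G : OGraph) : boundaryGraph G ⟶ G :=
  OHom.mk
    (TypedHom.mk
      (GraphHom.mk (fun e => e.elim)
        (fun p => Sum.elim (fun q => q.val) (fun q => q.val) p)
        (fun e => e.elim) (fun e => e.elim))
      (by rintro (⟨p, hp⟩ | ⟨p, hp⟩) <;> exact hp.1)
      (fun e => e.elim))
    (by rintro (⟨p, hp⟩ | ⟨p, hp⟩) hv <;> exact absurd hv (by simp [boundaryGraph]))

/-- An isolated point: both an input and an output. -/
def IsIsolated (G : OGraph) (p : G.X.G.P) : Prop := IsInput G p ∧ IsOutput G p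

/-- A point graph: an open-graph consisting only of (isolated) edge-points. -/
def IsPointGraph (G : OGraph) : Prop :=
  (∀ p, IsEdgePoint G p) ∧ (G.X.G.E → False)

/-- A boundary-coherent span of open-graphs. -/
def BoundaryCoherent {G H₁ H₂ : OGraph} (f : G ⟶ H₁) (g : G ⟶ H₂) : Prop :=
  Mono f ∧ Mono g ∧
  (∀ p, IsInput G p → ¬(IsInput H₁ (OHom.pp f p) ∧ IsInput H₂ (OHom.pp g p))) ∧
  (∀ p, IsOutput G p → ¬(IsOutput H₁ (OHom.pp f p) ∧ IsOutput H₂ (OHom.pp g p)))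

/-- A selective adhesive functor: a faithful functor (into an adhesive category) that
preserves monomorphisms, creates isomorphisms, and reflects pushouts. -/
structure SelectiveAdhesive {C A : Type*} [Category C] [Category A] (F : C ⥤ A) : Prop where
  faithful : ∀ {X Y : C} (f g : X ⟶ Y), F.map f = F.map g → f = g
  preservesMono : ∀ {X Y : C} (f : X ⟶ Y), Mono f → Mono (F.map f)
  createsIso : ∀ {X Y : C} (φ : F.obj X ≅ F.obj Y), ∃ ψ : X ≅ Y, F.map ψ.hom = φ.hom
  reflectsPushout : ∀ {W X Y Z : C} (f : W ⟶ X) (g : W ⟶ Y) (h : X ⟶ Z) (i : Y ⟶ Z),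
    IsPushout (F.map f) (F.map g) (F.map h) (F.map i) → IsPushout f g h i
/-! ### Auxiliary lemmas -/

theorem GraphHom.ext' {G H : PreGraph} {f g : GraphHom G H}
    (hpe : f.pe = g.pe) (hpp : f.pp = g.pp) : f = g := by
  cases f; cases g; cases hpe; cases hpp; rfl

theorem TypedHom.ext' {X Y : TypedGraph} {f g : X ⟶ Y}
    (hpe : f.h.pe = g.h.pe) (hpp : f.h.pp = g.h.pp) : f = g :=
  TypedHom.ext (GraphHom.ext' hpe hpp)

theorem OHom.ext' {G H : OGraph} {f g : G ⟶ H} (hf : f.f = g.f) : f = g :=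
  OHom.ext hf

/-! ### Monos: a mono of open-graphs is injective on points and edges -/

/-- The "kernel-pair" open-graph of an open-graph morphism. -/
def kerGraph {G H : OGraph} (f : G ⟶ H) : OGraph where
  X := { G := { E := {ee : G.X.G.E × G.X.G.E // f.f.h.pe ee.1 = f.f.h.pe ee.2}
                P := {pp : G.X.G.P × G.X.G.P // f.f.h.pp pp.1 = f.f.h.pp pp.2}
                s := fun e => ⟨(G.X.G.s e.1.1, G.X.G.s e.1.2), by
                  rw [← f.f.h.hs, ← f.f.h.hs]
                  exact congrArg H.X.G.s e.2⟩
                t := fun e => ⟨(G.X.G.t e.1.1, G.X.G.t e.1.2), by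
                  rw [← f.f.h.ht, ← f.f.h.ht]
                  exact congrArg H.X.G.t e.2⟩ }
         τ := { pe := fun e => G.X.τ.pe e.1.1
                pp := fun p => G.X.τ.pp p.1.1
                hs := fun e => G.X.τ.hs e.1.1
                ht := fun e => G.X.τ.ht e.1.1 } }
  open_in := by
    rintro ⟨⟨p, q⟩, hpq⟩ hp ⟨⟨e₁, e₁'⟩, he⟩ ⟨⟨e₂, e₂'⟩, he'⟩ h1 h2
    have hp' : G.X.τ.pp p = TyP.eps := hp
    have hpq' : f.f.h.pp p = f.f.h.pp q := hpq
    have hq : G.X.τ.pp q = TyP.eps := by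
      rw [← f.f.comm_pp q, ← hpq', f.f.comm_pp p]; exact hp'
    have c1 := congrArg Subtype.val h1
    have c2 := congrArg Subtype.val h2
    simp only [Prod.mk.injEq] at c1 c2
    apply Subtype.ext
    exact Prod.ext (G.open_in p hp' _ _ c1.1 c2.1) (G.open_in q hq _ _ c1.2 c2.2)
  open_out := by
    rintro ⟨⟨p, q⟩, hpq⟩ hp ⟨⟨e₁, e₁'⟩, he⟩ ⟨⟨e₂, e₂'⟩, he'⟩ h1 h2
    have hp' : G.X.τ.pp p = TyP.eps := hp
    have hpq' : f.f.h.pp p = f.f.h.pp q := hpq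
    have hq : G.X.τ.pp q = TyP.eps := by
      rw [← f.f.comm_pp q, ← hpq', f.f.comm_pp p]; exact hp'
    have c1 := congrArg Subtype.val h1
    have c2 := congrArg Subtype.val h2
    simp only [Prod.mk.injEq] at c1 c2
    apply Subtype.ext
    exact Prod.ext (G.open_out p hp' _ _ c1.1 c2.1) (G.open_out q hq _ _ c1.2 c2.2)

/-- If an edge has source typed `V`, it is typed `ve`. -/
theorem edge_type_of_s {G : OGraph} (e : G.X.G.E)
    (hs : G.X.τ.pp (G.X.G.s e) = TyP.V) : G.X.τ.pe e = TyE.ve := by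
  have := G.X.τ.hs e
  rw [hs] at this
  rcases h : G.X.τ.pe e with _|_|_ <;> rw [h] at this <;> simp_all [twoG]

theorem edge_type_of_t {G : OGraph} (e : G.X.G.E)
    (ht : G.X.τ.pp (G.X.G.t e) = TyP.V) : G.X.τ.pe e = TyE.ev := by
  have := G.X.τ.ht e
  rw [ht] at this
  rcases h : G.X.τ.pe e with _|_|_ <;> rw [h] at this <;> simp_all [twoG]

/-- First projection of the kernel pair. -/
def kerProj₁TH {G H : OGraph} (f : G ⟶ H) : (kerGraph f).X ⟶ G.X :=
  TypedHom.mk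
    (GraphHom.mk (fun e => e.1.1) (fun p => p.1.1)
      (fun _ => rfl) (fun _ => rfl))
    (fun _ => rfl) (fun _ => rfl)

/-- Second projection of the kernel pair. -/
def kerProj₂TH {G H : OGraph} (f : G ⟶ H) : (kerGraph f).X ⟶ G.X :=
  TypedHom.mk
    (GraphHom.mk (fun e => e.1.2) (fun p => p.1.2)
      (fun _ => rfl) (fun _ => rfl))
    (fun p => by
      show G.X.τ.pp p.1.2 = G.X.τ.pp p.1.1
      rw [← f.f.comm_pp p.1.2, ← p.2, f.f.comm_pp p.1.1])
    (fun e => by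
      show G.X.τ.pe e.1.2 = G.X.τ.pe e.1.1
      rw [← f.f.comm_pe e.1.2, ← e.2, f.f.comm_pe e.1.1])

theorem kerProj_full {G H : OGraph} (f : G ⟶ H) :
    FullOnVertices (kerProj₁TH f) := by
  rintro ⟨⟨p, q⟩, hpq⟩ hp e hadj
  have hp' : G.X.τ.pp p = TyP.V := hp
  have hpq' : f.f.h.pp p = f.f.h.pp q := hpq
  have hq : G.X.τ.pp q = TyP.V := by
    rw [← f.f.comm_pp q, ← hpq', f.f.comm_pp p]; exact hp'
  have hadj' : G.X.G.s e = p ∨ G.X.G.t e = p := hadj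
  rcases hadj' with hse | hte
  · have hety : G.X.τ.pe e = TyE.ve := edge_type_of_s e (by rw [hse]; exact hp')
    have himg : H.X.G.s (f.f.h.pe e) = f.f.h.pp q := by
      rw [f.f.h.hs e, hse, hpq']
    obtain ⟨e', he', hadj''⟩ := f.full q hq (f.f.h.pe e) (Or.inl himg)
    have he'' : f.f.h.pe e' = f.f.h.pe e := he'
    have he'ty : G.X.τ.pe e' = TyE.ve := by
      rw [← f.f.comm_pe e', he'', f.f.comm_pe e, hety]
    have hse' : G.X.G.s e' = q := by
      rcases hadj'' with hh | hh
      · exact hh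
      · exfalso
        have := G.X.τ.ht e'
        rw [he'ty, hh, hq] at this
        simp [twoG] at this
    refine ⟨⟨(e, e'), he''.symm⟩, rfl, Or.inl ?_⟩
    exact Subtype.ext (Prod.ext hse hse')
  · have hety : G.X.τ.pe e = TyE.ev := edge_type_of_t e (by rw [hte]; exact hp')
    have himg : H.X.G.t (f.f.h.pe e) = f.f.h.pp q := by
      rw [f.f.h.ht e, hte, hpq']
    obtain ⟨e', he', hadj''⟩ := f.full q hq (f.f.h.pe e) (Or.inr himg)
    have he'' : f.f.h.pe e' = f.f.h.pe e := he'
    have he'ty : G.X.τ.pe e' = TyE.ev := by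
      rw [← f.f.comm_pe e', he'', f.f.comm_pe e, hety]
    have hte' : G.X.G.t e' = q := by
      rcases hadj'' with hh | hh
      · exfalso
        have := G.X.τ.hs e'
        rw [he'ty, hh, hq] at this
        simp [twoG] at this
      · exact hh
    refine ⟨⟨(e, e'), he''.symm⟩, rfl, Or.inr ?_⟩
    exact Subtype.ext (Prod.ext hte hte')

theorem kerProj_full' {G H : OGraph} (f : G ⟶ H) :
    FullOnVertices (kerProj₂TH f) := by
  rintro ⟨⟨q, p⟩, hpq⟩ hp e hadj
  have hq : G.X.τ.pp q = TyP.V := hp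
  have hpq' : f.f.h.pp q = f.f.h.pp p := hpq
  have hp' : G.X.τ.pp p = TyP.V := by
    rw [← f.f.comm_pp p, ← hpq', f.f.comm_pp q]; exact hq
  have hadj' : G.X.G.s e = p ∨ G.X.G.t e = p := hadj
  rcases hadj' with hse | hte
  · have hety : G.X.τ.pe e = TyE.ve := edge_type_of_s e (by rw [hse]; exact hp')
    have himg : H.X.G.s (f.f.h.pe e) = f.f.h.pp q := by
      rw [f.f.h.hs e, hse, hpq']
    obtain ⟨e', he', hadj''⟩ := f.full q hq (f.f.h.pe e) (Or.inl himg)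
    have he'' : f.f.h.pe e' = f.f.h.pe e := he'
    have he'ty : G.X.τ.pe e' = TyE.ve := by
      rw [← f.f.comm_pe e', he'', f.f.comm_pe e, hety]
    have hse' : G.X.G.s e' = q := by
      rcases hadj'' with hh | hh
      · exact hh
      · exfalso
        have := G.X.τ.ht e'
        rw [he'ty, hh, hq] at this
        simp [twoG] at this
    refine ⟨⟨(e', e), he''⟩, rfl, Or.inl ?_⟩
    exact Subtype.ext (Prod.ext hse' hse)
  · have hety : G.X.τ.pe e = TyE.ev := edge_type_of_t e (by rw [hte]; exact hp')
    have himg : H.X.G.t (f.f.h.pe e) = f.f.h.pp q := by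
      rw [f.f.h.ht e, hte, hpq']
    obtain ⟨e', he', hadj''⟩ := f.full q hq (f.f.h.pe e) (Or.inr himg)
    have he'' : f.f.h.pe e' = f.f.h.pe e := he'
    have he'ty : G.X.τ.pe e' = TyE.ev := by
      rw [← f.f.comm_pe e', he'', f.f.comm_pe e, hety]
    have hte' : G.X.G.t e' = q := by
      rcases hadj'' with hh | hh
      · exfalso
        have := G.X.τ.hs e'
        rw [he'ty, hh, hq] at this
        simp [twoG] at this
      · exact hh
    refine ⟨⟨(e', e), he''⟩, rfl, Or.inr ?_⟩
    exact Subtype.ext (Prod.ext hte' hte)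

/-- A mono of open-graphs is injective on points and edges. -/
theorem mono_inj {G H : OGraph} (f : G ⟶ H) (hm : Mono f) :
    (∀ p q, f.f.h.pp p = f.f.h.pp q → p = q) ∧
    (∀ e e', f.f.h.pe e = f.f.h.pe e' → e = e') := by
  let π₁ : kerGraph f ⟶ G := ⟨kerProj₁TH f, kerProj_full f⟩
  let π₂ : kerGraph f ⟶ G := ⟨kerProj₂TH f, kerProj_full' f⟩
  have hcomp : π₁ ≫ f = π₂ ≫ f := by
    apply OHom.ext'
    apply TypedHom.ext'
    · funext e; exact e.2
    · funext p; exact p.2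
  have heq : π₁ = π₂ := (cancel_mono f).mp hcomp
  constructor
  · intro p q hpq
    exact congrArg (fun φ : kerGraph f ⟶ G => φ.f.h.pp ⟨(p, q), hpq⟩) heq
  · intro e e' hee
    exact congrArg (fun φ : kerGraph f ⟶ G => φ.f.h.pe ⟨(e, e'), hee⟩) heq
/-! ### Joint surjectivity of pushout legs in `TypedGraph` -/

section JointSurj

variable {X Y Z : TypedGraph} (h : X ⟶ Z) (i : Y ⟶ Z)

def InP (p : Z.G.P) : Prop := (∃ x, h.h.pp x = p) ∨ (∃ y, i.h.pp y = p)

def InE (e : Z.G.E) : Prop := (∃ x, h.h.pe x = e) ∨ (∃ y, i.h.pe y = e)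

open Classical in
noncomputable def vmap (p : Z.G.P) : Z.G.P ⊕ {q // ¬ InP h i q} :=
  if hq : InP h i p then .inl p else .inr ⟨p, hq⟩

open Classical in
noncomputable def emap (e : Z.G.E) : Z.G.E ⊕ {e' // ¬ InE h i e'} :=
  if he : InE h i e then .inl e else .inr ⟨e, he⟩

theorem vmap_pos {p : Z.G.P} (hp : InP h i p) : vmap h i p = .inl p := by
  unfold vmap; exact dif_pos hp

theorem emap_pos {e : Z.G.E} (he : InE h i e) : emap h i e = .inl e := by
  unfold emap; exact dif_pos he

theorem InP_s {e : Z.G.E} (he : InE h i e) : InP h i (Z.G.s e) := by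
  rcases he with ⟨x, hx⟩ | ⟨y, hy⟩
  · exact Or.inl ⟨X.G.s x, by rw [← h.h.hs, hx]⟩
  · exact Or.inr ⟨Y.G.s y, by rw [← i.h.hs, hy]⟩

theorem InP_t {e : Z.G.E} (he : InE h i e) : InP h i (Z.G.t e) := by
  rcases he with ⟨x, hx⟩ | ⟨y, hy⟩
  · exact Or.inl ⟨X.G.t x, by rw [← h.h.ht, hx]⟩
  · exact Or.inr ⟨Y.G.t y, by rw [← i.h.ht, hy]⟩

/-- The doubling graph used to test joint surjectivity. -/
noncomputable def Wd : TypedGraph where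
  G := { E := Z.G.E ⊕ {e // ¬ InE h i e}
         P := Z.G.P ⊕ {q // ¬ InP h i q}
         s := Sum.elim (fun e => Sum.inl (Z.G.s e)) (fun e => vmap h i (Z.G.s e.1))
         t := Sum.elim (fun e => Sum.inl (Z.G.t e)) (fun e => vmap h i (Z.G.t e.1)) }
  τ := { pe := Sum.elim Z.τ.pe (fun e => Z.τ.pe e.1)
         pp := Sum.elim Z.τ.pp (fun q => Z.τ.pp q.1)
         hs := by
           rintro (e | e)
           · exact Z.τ.hs e
           · show twoG.s (Z.τ.pe e.1) = Sum.elim _ _ (vmap h i (Z.G.s e.1))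
             unfold vmap; split <;> exact Z.τ.hs e.1
         ht := by
           rintro (e | e)
           · exact Z.τ.ht e
           · show twoG.t (Z.τ.pe e.1) = Sum.elim _ _ (vmap h i (Z.G.t e.1))
             unfold vmap; split <;> exact Z.τ.ht e.1 }

noncomputable def uHom : Z ⟶ Wd h i :=
  ⟨⟨Sum.inl, Sum.inl, fun _ => rfl, fun _ => rfl⟩, fun _ => rfl, fun _ => rfl⟩

noncomputable def vHom : Z ⟶ Wd h i where
  h := { pe := emap h i
         pp := vmap h i
         hs := by
           intro e
           show (Wd h i).G.s (emap h i e) = vmap h i (Z.G.s e)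
           unfold emap
           split
           · next he => exact ((vmap_pos h i (InP_s h i he))).symm
           · rfl
         ht := by
           intro e
           show (Wd h i).G.t (emap h i e) = vmap h i (Z.G.t e)
           unfold emap
           split
           · next he => exact ((vmap_pos h i (InP_t h i he))).symm
           · rfl }
  comm_pp := by
    intro p
    show Sum.elim _ _ (vmap h i p) = Z.τ.pp p
    unfold vmap; split <;> rfl
  comm_pe := by
    intro e
    show Sum.elim _ _ (emap h i e) = Z.τ.pe e
    unfold emap; split <;> rfl

theorem jointly_surjective
    (he : ∀ (u v : Z ⟶ Wd h i), h ≫ u = h ≫ v → i ≫ u = i ≫ v → u = v)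
    (p : Z.G.P) : InP h i p := by
  have h1 : h ≫ uHom h i = h ≫ vHom h i := by
    apply TypedHom.ext'
    · funext x
      exact (emap_pos h i (Or.inl ⟨x, rfl⟩)).symm
    · funext x
      exact (vmap_pos h i (Or.inl ⟨x, rfl⟩)).symm
  have h2 : i ≫ uHom h i = i ≫ vHom h i := by
    apply TypedHom.ext'
    · funext y
      exact (emap_pos h i (Or.inr ⟨y, rfl⟩)).symm
    · funext y
      exact (vmap_pos h i (Or.inr ⟨y, rfl⟩)).symm
  have := he _ _ h1 h2
  by_contra hnp
  have hp' : (Sum.inl p : Z.G.P ⊕ {q // ¬ InP h i q}) = vmap h i p :=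
    congrArg (fun φ : Z ⟶ Wd h i => φ.h.pp p) this
  have hneg : vmap h i p = .inr ⟨p, hnp⟩ := dif_neg hnp
  rw [hneg] at hp'
  exact Sum.inl_ne_inr hp'

end JointSurj

/-! ### Descent map for reflected pushouts -/

noncomputable def descO {W X Y Z : OGraph} {f : W ⟶ X} {g : W ⟶ Y} {h : X ⟶ Z} {i : Y ⟶ Z}
    (hp : IsPushout (S.map f) (S.map g) (S.map h) (S.map i))
    (s : PushoutCocone f g) : Z ⟶ s.pt where
  f := hp.desc (S.map s.inl) (S.map s.inr) (congrArg S.map s.condition)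
  full := by
    have hsur : ∀ p : Z.X.G.P, InP (S.map h) (S.map i) p := fun p =>
      jointly_surjective (S.map h) (S.map i)
        (fun u v h1 h2 => hp.hom_ext h1 h2) p
    set d : Z.X ⟶ s.pt.X :=
      hp.desc (S.map s.inl) (S.map s.inr) (congrArg S.map s.condition) with hd
    intro v hv e hadj
    rcases hsur v with ⟨x, hx⟩ | ⟨y, hy⟩
    · have hx' : h.f.h.pp x = v := hx
      have hxv : X.X.τ.pp x = TyP.V := by
        rw [← h.f.comm_pp x, hx']; exact hv
      have hfac := hp.inl_desc (S.map s.inl) (S.map s.inr) (congrArg S.map s.condition)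
      have hdpp : d.h.pp (h.f.h.pp x) = s.inl.f.h.pp x :=
        congrArg (fun t : X.X ⟶ s.pt.X => t.h.pp x) hfac
      rw [← hx', hdpp] at hadj
      obtain ⟨e', he', hadj'⟩ := s.inl.full x hxv e hadj
      refine ⟨h.f.h.pe e', ?_, ?_⟩
      · have hdpe : d.h.pe (h.f.h.pe e') = s.inl.f.h.pe e' :=
          congrArg (fun t : X.X ⟶ s.pt.X => t.h.pe e') hfac
        rw [hdpe, he']
      · rcases hadj' with hs' | ht'
        · left; rw [← hx', h.f.h.hs e', hs']
        · right; rw [← hx', h.f.h.ht e', ht']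
    · have hy' : i.f.h.pp y = v := hy
      have hyv : Y.X.τ.pp y = TyP.V := by
        rw [← i.f.comm_pp y, hy']; exact hv
      have hfac := hp.inr_desc (S.map s.inl) (S.map s.inr) (congrArg S.map s.condition)
      have hdpp : d.h.pp (i.f.h.pp y) = s.inr.f.h.pp y :=
        congrArg (fun t : Y.X ⟶ s.pt.X => t.h.pp y) hfac
      rw [← hy', hdpp] at hadj
      obtain ⟨e', he', hadj'⟩ := s.inr.full y hyv e hadj
      refine ⟨i.f.h.pe e', ?_, ?_⟩
      · have hdpe : d.h.pe (i.f.h.pe e') = s.inr.f.h.pe e' :=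
          congrArg (fun t : Y.X ⟶ s.pt.X => t.h.pe e') hfac
        rw [hdpe, he']
      · rcases hadj' with hs' | ht'
        · left; rw [← hy', i.f.h.hs e', hs']
        · right; rw [← hy', i.f.h.ht e', ht']
/-- The embedding functor `S : OGraph ⥤ Graph/2_G` is a selective adhesive functor:
faithful, preserves monomorphisms, creates isomorphisms, and reflects pushouts. -/
theorem S_selectiveAdhesive : SelectiveAdhesive S := by
  constructor
  · -- faithful
    intro X Y f g hfg
    exact OHom.ext' hfg
  · -- preserves monos
    intro G H f hm
    obtain ⟨hpinj, heinj⟩ := mono_inj f hm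
    constructor
    intro W a b hab
    apply TypedHom.ext'
    · funext e
      exact heinj _ _ (congrArg (fun t : W ⟶ H.X => t.h.pe e) hab)
    · funext p
      exact hpinj _ _ (congrArg (fun t : W ⟶ H.X => t.h.pp p) hab)
  · -- creates isomorphisms
    intro G H φ
    have hhi_pp : ∀ p, φ.inv.h.pp (φ.hom.h.pp p) = p := fun p =>
      congrArg (fun t : G.X ⟶ G.X => t.h.pp p) φ.hom_inv_id
    have hih_pp : ∀ p, φ.hom.h.pp (φ.inv.h.pp p) = p := fun p =>
      congrArg (fun t : H.X ⟶ H.X => t.h.pp p) φ.inv_hom_id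
    have hhi_pe : ∀ e, φ.inv.h.pe (φ.hom.h.pe e) = e := fun e =>
      congrArg (fun t : G.X ⟶ G.X => t.h.pe e) φ.hom_inv_id
    have hih_pe : ∀ e, φ.hom.h.pe (φ.inv.h.pe e) = e := fun e =>
      congrArg (fun t : H.X ⟶ H.X => t.h.pe e) φ.inv_hom_id
    have full1 : FullOnVertices φ.hom := by
      intro v hv e hadj
      refine ⟨φ.inv.h.pe e, hih_pe e, ?_⟩
      rcases hadj with hs | ht
      · left
        rw [φ.inv.h.hs e, hs, hhi_pp]
      · right
        rw [φ.inv.h.ht e, ht, hhi_pp]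
    have full2 : FullOnVertices φ.inv := by
      intro v hv e hadj
      refine ⟨φ.hom.h.pe e, hhi_pe e, ?_⟩
      rcases hadj with hs | ht
      · left
        rw [φ.hom.h.hs e, hs, hih_pp]
      · right
        rw [φ.hom.h.ht e, ht, hih_pp]
    exact ⟨⟨⟨φ.hom, full1⟩, ⟨φ.inv, full2⟩, OHom.ext' φ.hom_inv_id,
      OHom.ext' φ.inv_hom_id⟩, rfl⟩
  · -- reflects pushouts
    intro W X Y Z f g h i hp
    have comm : f ≫ h = g ≫ i := OHom.ext' hp.w
    exact IsPushout.of_isColimit (PushoutCocone.IsColimit.mk comm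
      (fun s => descO hp s)
      (fun s => OHom.ext' (hp.inl_desc _ _ _))
      (fun s => OHom.ext' (hp.inr_desc _ _ _))
      (fun s m hm1 hm2 => OHom.ext' (hp.hom_ext
        ((congrArg OHom.f hm1).trans
          (hp.inl_desc (S.map s.inl) (S.map s.inr) (congrArg S.map s.condition)).symm)
        ((congrArg OHom.f hm2).trans
          (hp.inr_desc (S.map s.inl) (S.map s.inr) (congrArg S.map s.condition)).symm))))
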